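/- Let V be a finite-dimensional real vector space and S : V → End(V) a continuous map such that S(λv) = λ^k S(v) for all λ > 0 (homogeneity of positive degree k ≥ 1). Suppose v ∈ V has the property that for every λ ≠ 0 there is an invertible T : V → V with T(v) = λv and S(λv) = T ∘ S(v) ∘ T⁻¹. Then S(v) is nilpotent. -/

import Mathlib

open Polynomial

lemma homog_eval_smul {σ R : Type*} [CommSemiring R] {p : MvPolynomial σ R} {m : ℕ}
    (h : p.IsHomogeneous m) (c : R) (x : σ → R) :
    MvPolynomial.eval (c • x) p = c ^ m * MvPolynomial.eval x p := by
  rw [MvPolynomial.eval_eq, MvPolynomial.eval_eq, Finset.mul_sum]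
  apply Finset.sum_congr rfl
  intro d hd
  have hdeg : (d.sum fun _ n => n) = m := by
    have := h (MvPolynomial.mem_support_iff.mp hd)
    simpa [Finsupp.weight, Finsupp.linearCombination, Finsupp.sum] using this
  have : (∏ i ∈ d.support, (c • x) i ^ d i)
      = c ^ m * ∏ i ∈ d.support, x i ^ d i := by
    simp only [Pi.smul_apply, smul_eq_mul, mul_pow]
    rw [Finset.prod_mul_distrib, Finset.prod_pow_eq_pow_sum]
    rw [show (∑ i ∈ d.support, d i) = m from hdeg]
  rw [this]; ring

lemma charpoly_smul_coeff {V : Type*} [NormedAddCommGroup V] [NormedSpace ℝ V]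
    [FiniteDimensional ℝ V] (f : Module.End ℝ V) (a : ℝ) (i j : ℕ)
    (hij : i + j = Module.finrank ℝ V) :
    (a • f).charpoly.coeff i = a ^ j * f.charpoly.coeff i := by
  let b := Module.Free.chooseBasis ℝ (Module.End ℝ V)
  have h1 := LinearMap.polyCharpoly_coeff_eval (LinearMap.id (R := ℝ) (M := Module.End ℝ V)) b (a • f) i
  have h2 := LinearMap.polyCharpoly_coeff_eval (LinearMap.id (R := ℝ) (M := Module.End ℝ V)) b f i
  have hom := LinearMap.polyCharpoly_coeff_isHomogeneous
    (LinearMap.id (R := ℝ) (M := Module.End ℝ V)) b i j hij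
  simp only [LinearMap.id_apply] at h1 h2
  rw [← h1, ← h2, map_smul]
  have : ((a • b.repr f : _ →₀ ℝ) : _ → ℝ) = a • ((b.repr f : _ →₀ ℝ) : _ → ℝ) := by
    ext t; simp
  rw [this, homog_eval_smul hom]

theorem stmt5 {V : Type*} [NormedAddCommGroup V] [NormedSpace ℝ V] [FiniteDimensional ℝ V]
    (S : V → (V →L[ℝ] V)) (hS : Continuous S) (k : ℕ) (hk : 1 ≤ k)
    (hhom : ∀ c : ℝ, 0 < c → ∀ w : V, S (c • w) = c ^ k • S w)
    (v : V)
    (hiso : ∀ c : ℝ, c ≠ 0 → ∃ T : V ≃L[ℝ] V, T v = c • v ∧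
      S (c • v) = (T : V →L[ℝ] V).comp ((S v).comp (T.symm : V →L[ℝ] V))) :
    IsNilpotent (S v) := by
  set n := Module.finrank ℝ V with hn
  set f : Module.End ℝ V := (S v : V →ₗ[ℝ] V) with hf
  set a : ℝ := (2:ℝ) ^ k with ha
  obtain ⟨T, -, hT⟩ := hiso 2 (by norm_num)
  have h2 : S ((2:ℝ) • v) = a • S v := hhom 2 (by norm_num) v
  have hconj : (a • f).charpoly = f.charpoly := by
    have heq : a • f = T.toLinearEquiv.conj f := by
      rw [h2] at hT
      ext x
      have := congrArg (fun g => g x) hT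
      simpa [LinearEquiv.conj_apply, f] using this
    rw [heq, LinearEquiv.charpoly_conj]
  have ha1 : (1:ℝ) < a := by
    rw [ha]
    exact one_lt_pow₀ (by norm_num) (by omega)
  have hcoeff : ∀ i, i < n → f.charpoly.coeff i = 0 := by
    intro i hi
    have hcs := charpoly_smul_coeff f a i (n - i) (by omega)
    rw [hconj] at hcs
    have hb1 : (1:ℝ) < a ^ (n - i) := one_lt_pow₀ ha1 (by omega)
    have h0 : (a ^ (n - i) - 1) * f.charpoly.coeff i = 0 := by
      rw [sub_mul, one_mul, ← hcs, sub_self]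
    rcases mul_eq_zero.mp h0 with h | h
    · linarith
    · exact h
  have hcp : f.charpoly = Polynomial.X ^ n := by
    have hmon := f.charpoly_monic
    have hdeg : f.charpoly.natDegree = n := f.charpoly_natDegree
    ext j
    rw [Polynomial.coeff_X_pow]
    rcases lt_trichotomy j n with h | h | h
    · rw [hcoeff j h, if_neg h.ne]
    · rw [if_pos h, h, ← hdeg]; exact hmon
    · rw [if_neg h.ne', Polynomial.coeff_eq_zero_of_natDegree_lt (by omega)]
  obtain ⟨m, hm⟩ := (LinearMap.isNilpotent_iff_charpoly f).mpr hcp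
  have hcoe : ((S v ^ m : V →L[ℝ] V) : V →ₗ[ℝ] V) = f ^ m :=
    map_pow (ContinuousLinearMap.toLinearMapRingHom (R₁ := ℝ) (M₁ := V)) (S v) m
  refine ⟨m, ?_⟩
  ext x
  have := LinearMap.congr_fun (hcoe.trans hm) x
  simpa [Module.End.pow_apply] using this
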